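/- Under the open set condition, there is a constant c_1 such that for every x ∈ K and 0 < r < 1, μ(B(x,r)) ≤ c_1 · max{ p_u : u ∈ Γ_r, S_u(K) ∩ B(x,r) ≠ ∅ }. -/

import Mathlib

open Metric MeasureTheory Topology
open scoped NNReal ENNReal Classical

/-- `S_u = S_{u_1} ∘ ⋯ ∘ S_{u_n}` for a finite word `u`. -/
def wordMap {N : ℕ} {E : Type*} (S : Fin N → E → E) : List (Fin N) → E → E
  | [] => id
  | i :: u => S i ∘ wordMap S u

/-- `p_u = p_{u_1} ⋯ p_{u_n}` for a finite word `u`. -/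
def wordProd {N : ℕ} (p : Fin N → ℝ) (u : List (Fin N)) : ℝ :=
  (u.map p).prod

section Words
variable {N : ℕ} {E : Type*} {S : Fin N → E → E} {r p : Fin N → ℝ}

lemma wordMap_nil : wordMap S [] = id := rfl
lemma wordMap_cons (i : Fin N) (u : List (Fin N)) :
    wordMap S (i :: u) = S i ∘ wordMap S u := rfl

lemma wordMap_append (u v : List (Fin N)) :
    wordMap S (u ++ v) = wordMap S u ∘ wordMap S v := by
  induction u with
  | nil => rfl
  | cons i u ih => simp [wordMap_cons, List.cons_append, ih, Function.comp_assoc]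

@[simp] lemma wordProd_nil : wordProd p [] = 1 := rfl
lemma wordProd_cons (i : Fin N) (u : List (Fin N)) :
    wordProd p (i :: u) = p i * wordProd p u := by simp [wordProd]
lemma wordProd_append (u v : List (Fin N)) :
    wordProd p (u ++ v) = wordProd p u * wordProd p v := by simp [wordProd]
@[simp] lemma wordProd_singleton (i : Fin N) : wordProd p [i] = p i := by simp [wordProd]

lemma wordProd_pos (h : ∀ i, 0 < p i) (u : List (Fin N)) : 0 < wordProd p u := by
  induction u with
  | nil => norm_num
  | cons i u ih => rw [wordProd_cons]; exact mul_pos (h i) ih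

lemma wordProd_le_one (h0 : ∀ i, 0 < p i) (h1 : ∀ i, p i ≤ 1) (u : List (Fin N)) :
    wordProd p u ≤ 1 := by
  induction u with
  | nil => norm_num
  | cons i u ih =>
    rw [wordProd_cons]
    exact mul_le_one₀ (h1 i) (wordProd_pos h0 u).le ih

lemma wordProd_le_pow {c : ℝ} (h0 : ∀ i, 0 < p i) (h1 : ∀ i, p i ≤ c) (u : List (Fin N)) :
    wordProd p u ≤ c ^ u.length := by
  induction u with
  | nil => norm_num
  | cons i u ih =>
    rw [wordProd_cons, List.length_cons, pow_succ, mul_comm (c ^ u.length) c]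
    exact mul_le_mul (h1 i) ih (wordProd_pos h0 u).le ((h0 i).le.trans (h1 i))

lemma wordProd_prefix_le (h0 : ∀ i, 0 < p i) (h1 : ∀ i, p i ≤ 1) {u v : List (Fin N)}
    (huv : u <+: v) : wordProd p v ≤ wordProd p u := by
  obtain ⟨t, rfl⟩ := huv
  rw [wordProd_append]
  calc wordProd p u * wordProd p t ≤ wordProd p u * 1 :=
        mul_le_mul_of_nonneg_left (wordProd_le_one h0 h1 t) (wordProd_pos h0 u).le
    _ = wordProd p u := mul_one _

lemma dist_wordMap {E : Type*} [PseudoMetricSpace E] {S : Fin N → E → E} {r : Fin N → ℝ}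
    (hS : ∀ i x y, dist (S i x) (S i y) = r i * dist x y) (u : List (Fin N)) (x y : E) :
    dist (wordMap S u x) (wordMap S u y) = wordProd r u * dist x y := by
  induction u with
  | nil => simp [wordMap_nil]
  | cons i u ih => rw [wordMap_cons, Function.comp_apply, Function.comp_apply, hS,
      ih, wordProd_cons, mul_assoc]

end Words


abbrev Euc (d : ℕ) := EuclideanSpace ℝ (Fin d)

section Similarity
variable {d : ℕ}

lemma sim_injective {f : Euc d → Euc d} {c : ℝ} (hc : 0 < c)
    (hf : ∀ x y, dist (f x) (f y) = c * dist x y) : Function.Injective f := by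
  intro x y h
  have h2 := hf x y
  rw [h, dist_self] at h2
  have h3 : dist x y = 0 := by
    rcases mul_eq_zero.mp h2.symm with h1 | h1
    · exact absurd h1 hc.ne'
    · exact h1
  exact dist_eq_zero.mp h3

lemma sim_lipschitz {f : Euc d → Euc d} {c : ℝ} (hc : 0 < c)
    (hf : ∀ x y, dist (f x) (f y) = c * dist x y) : LipschitzWith c.toNNReal f := by
  refine LipschitzWith.of_dist_le_mul fun x y => ?_
  rw [hf, Real.coe_toNNReal _ hc.le]

lemma sim_continuous {f : Euc d → Euc d} {c : ℝ} (hc : 0 < c)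
    (hf : ∀ x y, dist (f x) (f y) = c * dist x y) : Continuous f :=
  (sim_lipschitz hc hf).continuous

lemma sim_measurable {f : Euc d → Euc d} {c : ℝ} (hc : 0 < c)
    (hf : ∀ x y, dist (f x) (f y) = c * dist x y) : Measurable f :=
  (sim_continuous hc hf).measurable

lemma sim_surjective {f : Euc d → Euc d} {c : ℝ} (hc : 0 < c)
    (hf : ∀ x y, dist (f x) (f y) = c * dist x y) : Function.Surjective f := by
  classical
  set g : Euc d → Euc d := fun x => c⁻¹ • (f x - f 0) with hg
  have hgdist : ∀ x y, dist (g x) (g y) = dist x y := by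
    intro x y
    rw [hg]
    simp only
    rw [dist_smul₀, dist_sub_right, hf, Real.norm_eq_abs, abs_of_pos (inv_pos.2 hc),
      ← mul_assoc, inv_mul_cancel₀ hc.ne', one_mul]
  have hg0 : g 0 = 0 := by simp [hg]
  have hnorm : ∀ x, ‖g x‖ = ‖x‖ := by
    intro x
    have := hgdist x 0
    rwa [hg0, dist_zero_right, dist_zero_right] at this
  have hinner : ∀ x y, (inner ℝ (g x) (g y) : ℝ) = inner ℝ x y := by
    intro x y
    have h1 : ‖g x - g y‖ ^ 2 = ‖x - y‖ ^ 2 := by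
      rw [← dist_eq_norm, ← dist_eq_norm, hgdist]
    rw [norm_sub_sq_real, norm_sub_sq_real, hnorm, hnorm] at h1
    linarith
  have hadd : ∀ x y, g (x + y) = g x + g y := by
    intro x y
    have h0 : ‖g (x + y) - (g x + g y)‖ ^ 2 = 0 := by
      have expand : ‖g (x + y) - (g x + g y)‖ ^ 2 =
          ‖g (x+y)‖^2 + ‖g x‖^2 + ‖g y‖^2 - 2 * inner ℝ (g (x+y)) (g x)
            - 2 * inner ℝ (g (x+y)) (g y) + 2 * (inner ℝ (g x) (g y) : ℝ) := by
        rw [← real_inner_self_eq_norm_sq]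
        simp only [inner_sub_left, inner_sub_right, inner_add_left, inner_add_right,
          real_inner_self_eq_norm_sq]
        rw [real_inner_comm (g x) (g (x+y)), real_inner_comm (g y) (g (x+y)),
          real_inner_comm (g y) (g x)]
        ring
      rw [expand, hnorm, hnorm, hnorm, hinner, hinner, hinner]
      rw [← real_inner_self_eq_norm_sq (x + y)]
      simp only [inner_add_left, inner_add_right]
      rw [real_inner_comm y x]
      simp only [real_inner_self_eq_norm_sq]
      ring
    have := pow_eq_zero_iff (n := 2) (by norm_num) |>.mp h0
    rw [norm_eq_zero, sub_eq_zero] at this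
    exact this
  have hsmul : ∀ (t : ℝ) x, g (t • x) = t • g x := by
    intro t x
    have h0 : ‖g (t • x) - t • g x‖ ^ 2 = 0 := by
      have expand : ‖g (t • x) - t • g x‖ ^ 2 =
          ‖g (t•x)‖^2 - 2 * t * inner ℝ (g (t•x)) (g x) + t^2 * ‖g x‖^2 := by
        rw [← real_inner_self_eq_norm_sq]
        simp only [inner_sub_left, inner_sub_right, real_inner_smul_left,
          real_inner_smul_right, real_inner_self_eq_norm_sq]
        rw [real_inner_comm (g x) (g (t•x))]
        simp only [norm_smul, Real.norm_eq_abs, mul_pow, sq_abs]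
        ring
      rw [expand, hnorm, hnorm, hinner]
      simp only [real_inner_smul_left, real_inner_smul_right,
        real_inner_self_eq_norm_sq, norm_smul, Real.norm_eq_abs, mul_pow, sq_abs]
      ring
    have := pow_eq_zero_iff (n := 2) (by norm_num) |>.mp h0
    rw [norm_eq_zero, sub_eq_zero] at this
    exact this
  let glin : Euc d →ₗ[ℝ] Euc d := { toFun := g, map_add' := hadd, map_smul' := hsmul }
  have hginj : Function.Injective glin := by
    intro x y h
    have : dist (g x) (g y) = 0 := by
      have h' : g x = g y := h
      simp [h']
    rw [hgdist] at this
    exact dist_eq_zero.mp this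
  have hgsurj : Function.Surjective glin := LinearMap.injective_iff_surjective.mp hginj
  intro y
  obtain ⟨x, hx⟩ := hgsurj (c⁻¹ • (y - f 0))
  refine ⟨x, ?_⟩
  have hgx : g x = c⁻¹ • (y - f 0) := hx
  have : f x - f 0 = y - f 0 := by
    have := congrArg (fun z => c • z) hgx
    simpa [smul_smul, mul_inv_cancel₀ hc.ne', hg] using this
  exact sub_left_inj.mp this

lemma sim_image_ball {f : Euc d → Euc d} {c : ℝ} (hc : 0 < c)
    (hf : ∀ x y, dist (f x) (f y) = c * dist x y) (z : Euc d) (s : ℝ) :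
    f '' ball z s = ball (f z) (c * s) := by
  ext y
  constructor
  · rintro ⟨w, hw, rfl⟩
    rw [mem_ball] at hw ⊢
    rw [hf]
    exact (mul_lt_mul_iff_right₀ hc).mpr hw
  · intro hy
    obtain ⟨w, rfl⟩ := sim_surjective hc hf y
    rw [mem_ball, hf] at hy
    exact ⟨w, by rw [mem_ball]; exact lt_of_mul_lt_mul_left hy hc.le, rfl⟩

section Cut
variable {N d : ℕ}
variable {S : Fin N → Euc d → Euc d} {r p : Fin N → ℝ} {μ : Measure (Euc d)}

lemma step_measure (hr : ∀ i, r i ∈ Set.Ioo (0:ℝ) 1)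
    (hS : ∀ i x y, dist (S i x) (S i y) = r i * dist x y)
    (hμ : μ = ∑ i, ENNReal.ofReal (p i) • μ.map (S i)) {B : Set (Euc d)} (hB : MeasurableSet B) :
    μ B = ∑ i, ENNReal.ofReal (p i) * μ (S i ⁻¹' B) := by
  conv_lhs => rw [hμ]
  rw [Measure.finset_sum_apply]
  refine Finset.sum_congr rfl fun i _ => ?_
  rw [Measure.smul_apply, smul_eq_mul, Measure.map_apply (sim_measurable (hr i).1 (hS i)) hB]

/-- All words of length at most `L`. -/
noncomputable def allWords (N L : ℕ) : Finset (List (Fin N)) :=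
  (Finset.range (L+1)).biUnion fun k => (Finset.univ : Finset (Fin k → Fin N)).image List.ofFn

lemma mem_allWords {u : List (Fin N)} {L : ℕ} (h : u.length ≤ L) : u ∈ allWords N L := by
  refine Finset.mem_biUnion.2 ⟨u.length, Finset.mem_range.2 (by omega), ?_⟩
  exact Finset.mem_image.2 ⟨u.get, Finset.mem_univ _, List.ofFn_get u⟩

/-- The "cut" `Γ_ρ` restricted to words of length at most `L`. -/
noncomputable def cutWords (N : ℕ) (r : Fin N → ℝ) (ρ : ℝ) (L : ℕ) : Finset (List (Fin N)) :=
  (allWords N L).filter fun u => u ≠ [] ∧ wordProd r u < ρ ∧ ρ ≤ wordProd r u.dropLast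

lemma cut_sum (hr : ∀ i, r i ∈ Set.Ioo (0:ℝ) 1)
    (hS : ∀ i x y, dist (S i x) (S i y) = r i * dist x y)
    (hμ : μ = ∑ i, ENNReal.ofReal (p i) • μ.map (S i))
    (hp : ∀ i, 0 < p i)
    {rmax : ℝ} (hrm : ∀ i, r i ≤ rmax)
    {ρ : ℝ} (hρ1 : ρ ≤ 1) {L : ℕ} (hL : rmax ^ L < ρ)
    {B : Set (Euc d)} (hB : MeasurableSet B) :
    μ B ≤ ∑ u ∈ cutWords N r ρ L,
      ENNReal.ofReal (wordProd p u) * μ (wordMap S u ⁻¹' B) := by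
  have hr0 : ∀ i, 0 < r i := fun i => (hr i).1
  have claim : ∀ m (t : List (Fin N)), t.length + m = L → ρ ≤ wordProd r t →
      ENNReal.ofReal (wordProd p t) * μ (wordMap S t ⁻¹' B) ≤
      ∑ u ∈ (cutWords N r ρ L).filter (fun u => t <+: u),
        ENNReal.ofReal (wordProd p u) * μ (wordMap S u ⁻¹' B) := by
    intro m
    induction m with
    | zero =>
      intro t hlen hρt
      exfalso
      have h1 : wordProd r t ≤ rmax ^ t.length := wordProd_le_pow hr0 hrm t
      rw [Nat.add_zero] at hlen
      rw [hlen] at h1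
      linarith
    | succ m ih =>
      intro t hlen hρt
      have hBt : MeasurableSet (wordMap S t ⁻¹' B) :=
        (sim_measurable (wordProd_pos hr0 t) (dist_wordMap hS t)) hB
      rw [step_measure hr hS hμ hBt, Finset.mul_sum]
      have hterm : ∀ i : Fin N,
          ENNReal.ofReal (wordProd p t) * (ENNReal.ofReal (p i) * μ (S i ⁻¹' (wordMap S t ⁻¹' B)))
          = ENNReal.ofReal (wordProd p (t ++ [i])) * μ (wordMap S (t ++ [i]) ⁻¹' B) := by
        intro i
        rw [wordProd_append, ENNReal.ofReal_mul (wordProd_pos (fun j => hp j) t).le,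
          wordProd_singleton, mul_assoc]
        congr 2
        rw [wordMap_append]
        rfl
      rw [Finset.sum_congr rfl fun i _ => hterm i]
      set A : Fin N → Finset (List (Fin N)) :=
        fun i => (cutWords N r ρ L).filter (fun u => t ++ [i] <+: u) with hA
      have hper : ∀ i : Fin N,
          ENNReal.ofReal (wordProd p (t ++ [i])) * μ (wordMap S (t ++ [i]) ⁻¹' B) ≤
          ∑ u ∈ A i, ENNReal.ofReal (wordProd p u) * μ (wordMap S u ⁻¹' B) := by
        intro i
        by_cases hcase : wordProd r (t ++ [i]) < ρ
        · have hmem : t ++ [i] ∈ A i := by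
            rw [hA]
            refine Finset.mem_filter.2 ⟨Finset.mem_filter.2 ⟨mem_allWords ?_, ?_, hcase, ?_⟩,
              List.prefix_rfl⟩
            · simp only [List.length_append, List.length_singleton]; omega
            · simp
            · rw [List.dropLast_concat]; exact hρt
          exact Finset.single_le_sum
            (f := fun u => ENNReal.ofReal (wordProd p u) * μ (wordMap S u ⁻¹' B))
            (fun u _ => zero_le) hmem
        · push_neg at hcase
          have hlen' : (t ++ [i]).length + m = L := by
            simp only [List.length_append, List.length_singleton]; omega
          exact ih (t ++ [i]) hlen' hcase
      calc ∑ i : Fin N, ENNReal.ofReal (wordProd p (t ++ [i])) * μ (wordMap S (t ++ [i]) ⁻¹' B)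
          ≤ ∑ i : Fin N, ∑ u ∈ A i, ENNReal.ofReal (wordProd p u) * μ (wordMap S u ⁻¹' B) :=
            Finset.sum_le_sum fun i _ => hper i
        _ = ∑ u ∈ Finset.univ.biUnion A,
              ENNReal.ofReal (wordProd p u) * μ (wordMap S u ⁻¹' B) := by
            refine (Finset.sum_biUnion ?_).symm
            intro i _ j _ hij
            refine Finset.disjoint_left.2 fun u hu hu' => ?_
            rw [hA] at hu hu'
            have h1 := (Finset.mem_filter.1 hu).2
            have h2 := (Finset.mem_filter.1 hu').2
            have : t ++ [i] = t ++ [j] := by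
              rcases le_total (t ++ [i]).length (t ++ [j]).length with hle | hle
              · exact (List.prefix_of_prefix_length_le h1 h2 hle).eq_of_length (by simp)
              · exact ((List.prefix_of_prefix_length_le h2 h1 hle).eq_of_length (by simp)).symm
            have : [i] = [j] := by
              exact List.append_cancel_left this
            simp at this
            exact hij this
        _ ≤ ∑ u ∈ (cutWords N r ρ L).filter (fun u => t <+: u),
              ENNReal.ofReal (wordProd p u) * μ (wordMap S u ⁻¹' B) := by
            refine Finset.sum_le_sum_of_subset ?_
            intro u hu
            obtain ⟨i, _, hui⟩ := Finset.mem_biUnion.1 hu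
            rw [hA] at hui
            obtain ⟨hcut, hpre⟩ := Finset.mem_filter.1 hui
            exact Finset.mem_filter.2 ⟨hcut, ((t.prefix_append [i]).trans hpre)⟩
  have h0 := claim L [] (by simp) (by simpa using hρ1)
  simp only [show wordProd p ([] : List (Fin N)) = 1 from rfl, ENNReal.ofReal_one, one_mul,
    show wordMap S ([] : List (Fin N)) ⁻¹' B = B from rfl] at h0
  exact h0.trans (Finset.sum_le_sum_of_subset (Finset.filter_subset _ _))
end Cut

lemma bounded_support {N d : ℕ} {S : Fin N → Euc d → Euc d} {r p : Fin N → ℝ}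
    {μ : Measure (Euc d)} [IsProbabilityMeasure μ]
    (hr : ∀ i, r i ∈ Set.Ioo (0:ℝ) 1)
    (hS : ∀ i x y, dist (S i x) (S i y) = r i * dist x y)
    (hμ : μ = ∑ i, ENNReal.ofReal (p i) • μ.map (S i))
    (hp : ∀ i, 0 < p i) (hpsum : ∑ i, p i = 1)
    {rmax C R₀ : ℝ} (hrm : ∀ i, r i ≤ rmax) (hrm1 : rmax < 1) (hrm0 : 0 < rmax)
    (hC : ∀ i, ‖S i 0‖ ≤ C) (hC0 : 0 ≤ C)
    (hR₀ : (C + 1) / (1 - rmax) ≤ R₀) :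
    μ ((closedBall (0 : Euc d) R₀)ᶜ) = 0 := by
  have hR₀0 : 0 ≤ R₀ := le_trans (div_nonneg (by linarith) (by linarith)) hR₀
  have halg : ∀ R : ℝ, R₀ ≤ R → R + 1 ≤ (R - C) / rmax := by
    intro R hR
    rw [le_div_iff₀ hrm0]
    have h1 : (C + 1) / (1 - rmax) ≤ R := le_trans hR₀ hR
    rw [div_le_iff₀ (by linarith)] at h1
    nlinarith
  have honesum : (∑ i : Fin N, ENNReal.ofReal (p i)) = 1 := by
    rw [← ENNReal.ofReal_sum_of_nonneg (fun i _ => (hp i).le), hpsum, ENNReal.ofReal_one]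
  have hiter : ∀ R : ℝ, R₀ ≤ R →
      μ ((closedBall (0 : Euc d) R)ᶜ) ≤ μ ((closedBall (0 : Euc d) ((R - C) / rmax))ᶜ) := by
    intro R hR
    have hB : MeasurableSet ((closedBall (0 : Euc d) R)ᶜ) :=
      (measurableSet_closedBall).compl
    rw [step_measure hr hS hμ hB]
    have hsub : ∀ i : Fin N, S i ⁻¹' (closedBall (0 : Euc d) R)ᶜ ⊆
        (closedBall (0 : Euc d) ((R - C) / rmax))ᶜ := by
      intro i x hx
      simp only [Set.mem_preimage, Set.mem_compl_iff, mem_closedBall, dist_zero_right] at hx ⊢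
      intro hxx
      apply hx
      have h1 : dist (S i x) (S i 0) = r i * dist x 0 := hS i x 0
      have h2 : ‖S i x‖ ≤ r i * ‖x‖ + ‖S i 0‖ := by
        have h3 := dist_triangle (S i x) (S i 0) 0
        rw [h1] at h3
        simpa [dist_zero_right] using h3
      have hxnn : (0:ℝ) ≤ ‖x‖ := norm_nonneg _
      have hRC : 0 ≤ (R - C) / rmax := le_trans (by linarith) (halg R hR)
      have h3 : r i * ‖x‖ ≤ rmax * ((R - C) / rmax) :=
        mul_le_mul (hrm i) hxx hxnn hrm0.le
      rw [mul_div_cancel₀ _ hrm0.ne'] at h3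
      have := hC i
      linarith
    calc ∑ i : Fin N, ENNReal.ofReal (p i) * μ (S i ⁻¹' (closedBall (0 : Euc d) R)ᶜ)
        ≤ ∑ i : Fin N, ENNReal.ofReal (p i) * μ ((closedBall (0 : Euc d) ((R - C) / rmax))ᶜ) :=
          Finset.sum_le_sum fun i _ => mul_le_mul_right (measure_mono (hsub i)) _
      _ = 1 * μ ((closedBall (0 : Euc d) ((R - C) / rmax))ᶜ) := by
          rw [← Finset.sum_mul, honesum]
      _ = _ := one_mul _
  have hseq : ∀ k : ℕ, ∃ R : ℝ, R₀ + k ≤ R ∧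
      μ ((closedBall (0 : Euc d) R₀)ᶜ) ≤ μ ((closedBall (0 : Euc d) R)ᶜ) := by
    intro k
    induction k with
    | zero => exact ⟨R₀, by norm_num, le_rfl⟩
    | succ k ih =>
      obtain ⟨R, hR1, hR2⟩ := ih
      have hRR₀ : R₀ ≤ R := by
        have : (0:ℝ) ≤ (k:ℝ) := Nat.cast_nonneg k
        linarith
      refine ⟨(R - C) / rmax, ?_, hR2.trans (hiter R hRR₀)⟩
      have := halg R hRR₀
      push_cast
      linarith
  have hmono : ∀ k : ℕ, μ ((closedBall (0 : Euc d) R₀)ᶜ) ≤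
      μ ((closedBall (0 : Euc d) (R₀ + k))ᶜ) := by
    intro k
    obtain ⟨R, hR1, hR2⟩ := hseq k
    refine hR2.trans (measure_mono ?_)
    intro x hx
    simp only [Set.mem_compl_iff, mem_closedBall, dist_zero_right] at hx ⊢
    intro h; exact hx (h.trans hR1)
  have htends : Filter.Tendsto (fun k : ℕ => μ ((closedBall (0 : Euc d) (R₀ + k))ᶜ))
      Filter.atTop (𝓝 0) := by
    have hι : (⋂ k : ℕ, (closedBall (0 : Euc d) (R₀ + k))ᶜ) = ∅ := by
      ext x
      simp only [Set.mem_iInter, Set.mem_compl_iff, mem_closedBall, dist_zero_right,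
        Set.mem_empty_iff_false, iff_false, not_forall, not_not]
      obtain ⟨k, hk⟩ := exists_nat_ge ‖x‖
      exact ⟨k, by linarith⟩
    have := MeasureTheory.tendsto_measure_iInter_atTop
      (μ := μ) (s := fun k : ℕ => (closedBall (0 : Euc d) (R₀ + k))ᶜ)
      (fun k => (measurableSet_closedBall).compl.nullMeasurableSet)
      (fun k l hkl => by
        intro x hx
        simp only [Set.mem_compl_iff, mem_closedBall, dist_zero_right] at hx ⊢
        intro h
        exact hx (h.trans (by push_cast; have : (k:ℝ) ≤ l := Nat.cast_le.2 hkl; linarith)))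
      ⟨0, measure_ne_top μ _⟩
    rw [hι] at this
    simpa [Function.comp_def] using this
  have hle : μ ((closedBall (0 : Euc d) R₀)ᶜ) ≤ 0 :=
    ge_of_tendsto htends (Filter.Eventually.of_forall hmono)
  exact le_antisymm hle zero_le

lemma wordMap_image_subset {N : ℕ} {E : Type*} {S : Fin N → E → E} {A : Set E}
    (hA : ∀ i, S i '' A ⊆ A) (u : List (Fin N)) : wordMap S u '' A ⊆ A := by
  induction u with
  | nil => simp [wordMap_nil]
  | cons i u ih =>
    rw [wordMap_cons, Set.image_comp]
    exact (Set.image_mono (f := S i) ih).trans (hA i)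

lemma null_compl_K {N d : ℕ} {S : Fin N → Euc d → Euc d} {r p : Fin N → ℝ}
    {μ : Measure (Euc d)} [IsProbabilityMeasure μ] {K : Set (Euc d)}
    (hr : ∀ i, r i ∈ Set.Ioo (0:ℝ) 1)
    (hS : ∀ i x y, dist (S i x) (S i y) = r i * dist x y)
    (hμ : μ = ∑ i, ENNReal.ofReal (p i) • μ.map (S i))
    (hp : ∀ i, 0 < p i) (hpsum : ∑ i, p i = 1)
    (hKne : K.Nonempty) (hKc : IsCompact K) (hK : K = ⋃ i, S i '' K)
    {rmax C R₀ : ℝ} (hrm : ∀ i, r i ≤ rmax) (hrm1 : rmax < 1) (hrm0 : 0 < rmax)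
    (hC : ∀ i, ‖S i 0‖ ≤ C) (hC0 : 0 ≤ C)
    (hR₀ : (C + 1) / (1 - rmax) ≤ R₀) :
    μ Kᶜ = 0 := by
  obtain ⟨k₀, hk₀⟩ := id hKne
  have hR₀0 : 0 ≤ R₀ := le_trans (div_nonneg (by linarith) (by linarith)) hR₀
  have hSK : ∀ i, S i '' K ⊆ K := by
    intro i
    have h1 := Set.subset_iUnion (fun j => S j '' K) i
    rw [← hK] at h1
    exact h1
  have hwordK : ∀ u : List (Fin N), wordMap S u '' K ⊆ K := wordMap_image_subset hSK
  have hball := bounded_support hr hS hμ hp hpsum hrm hrm1 hrm0 hC hC0 hR₀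
  have hthick : ∀ ε : ℝ, 0 < ε → μ ((thickening ε K)ᶜ) = 0 := by
    intro ε hε
    set D : ℝ := R₀ + ‖k₀‖ with hD
    have hD0 : 0 ≤ D := by positivity
    set ρ : ℝ := min 2⁻¹ (ε / (D + 1)) with hρ
    have hρ0 : 0 < ρ := lt_min (by norm_num) (by positivity)
    have hρ1 : ρ ≤ 1 := le_trans (min_le_left _ _) (by norm_num)
    obtain ⟨L, hL⟩ : ∃ L : ℕ, rmax ^ L < ρ := exists_pow_lt_of_lt_one hρ0 hrm1
    have hB : MeasurableSet ((thickening ε K)ᶜ) := isOpen_thickening.measurableSet.compl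
    refine le_antisymm ?_ zero_le
    refine le_trans (cut_sum hr hS hμ hp hrm hρ1 hL hB) (le_of_eq ?_)
    refine Finset.sum_eq_zero fun u hu => ?_
    obtain ⟨-, hune, hulr, -⟩ := Finset.mem_filter.1 hu
    have hupos := wordProd_pos (fun i => (hr i).1) u
    have hsub : wordMap S u ⁻¹' (thickening ε K)ᶜ ⊆ (closedBall (0 : Euc d) R₀)ᶜ := by
      intro x hx
      simp only [Set.mem_preimage, Set.mem_compl_iff, mem_closedBall, dist_zero_right] at hx ⊢
      intro hxx
      apply hx
      rw [Metric.mem_thickening_iff]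
      refine ⟨wordMap S u k₀, hwordK u ⟨k₀, hk₀, rfl⟩, ?_⟩
      rw [dist_wordMap hS]
      have h1 : dist x k₀ ≤ D := by
        have := dist_triangle x (0 : Euc d) k₀
        rw [hD]
        have h2 : dist (0 : Euc d) k₀ = ‖k₀‖ := by rw [dist_comm, dist_zero_right]
        rw [dist_zero_right] at this
        linarith [this, h2 ▸ le_refl (dist (0:Euc d) k₀)]
      have h2 : wordProd r u * dist x k₀ ≤ wordProd r u * D :=
        mul_le_mul_of_nonneg_left h1 hupos.le
      have h3 : wordProd r u * D < ρ * (D + 1) := by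
        have := mul_lt_mul_of_pos_right hulr (show (0:ℝ) < D + 1 by linarith)
        nlinarith
      have h4 : ρ * (D + 1) ≤ ε := by
        have := min_le_right (2⁻¹ : ℝ) (ε / (D + 1))
        rw [← hρ] at this
        calc ρ * (D + 1) ≤ (ε / (D + 1)) * (D + 1) :=
              mul_le_mul_of_nonneg_right this (by linarith)
          _ = ε := div_mul_cancel₀ _ (by linarith)
      linarith
    have : μ (wordMap S u ⁻¹' (thickening ε K)ᶜ) = 0 :=
      le_antisymm ((measure_mono hsub).trans hball.le) zero_le
    rw [this, mul_zero]
  have hKcl : IsClosed K := hKc.isClosed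
  refine measure_mono_null ?_
    (measure_iUnion_null (s := fun n : ℕ => (thickening (1/(n+1) : ℝ) K)ᶜ)
      fun n => hthick _ (by positivity))
  intro x hx
  rw [Set.mem_compl_iff] at hx
  have hpos : 0 < infDist x K := (hKcl.notMem_iff_infDist_pos hKne).1 hx
  obtain ⟨n, hn⟩ := exists_nat_one_div_lt hpos
  refine Set.mem_iUnion.2 ⟨n, ?_⟩
  rw [Set.mem_compl_iff, Metric.mem_thickening_iff_infDist_lt hKne]
  push_neg
  exact le_of_lt (by exact_mod_cast hn)

lemma disjoint_wordMap_image {N : ℕ} {E : Type*} {S : Fin N → E → E} {U : Set E}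
    (hinj : ∀ i, Function.Injective (S i))
    (hUsub : ∀ i, S i '' U ⊆ U)
    (hUdisj : Pairwise fun i j : Fin N => Disjoint (S i '' U) (S j '' U)) :
    ∀ u v : List (Fin N), ¬ u <+: v → ¬ v <+: u →
      Disjoint (wordMap S u '' U) (wordMap S v '' U) := by
  intro u
  induction u with
  | nil => intro v huv _; exact absurd (List.nil_prefix) huv
  | cons i u ih =>
    intro v huv hvu
    match v with
    | [] => exact absurd (List.nil_prefix) hvu
    | j :: v =>
      by_cases hij : i = j
      · subst hij
        have h1 : ¬ u <+: v := fun h => huv (List.cons_prefix_cons.2 ⟨rfl, h⟩)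
        have h2 : ¬ v <+: u := fun h => hvu (List.cons_prefix_cons.2 ⟨rfl, h⟩)
        have hd := ih v h1 h2
        rw [wordMap_cons, wordMap_cons, Set.image_comp, Set.image_comp]
        exact Set.disjoint_image_image fun a ha b hb hab =>
          Set.disjoint_left.1 hd ha (hinj i hab ▸ hb)
      · have hd := hUdisj hij
        rw [wordMap_cons, wordMap_cons, Set.image_comp, Set.image_comp]
        refine hd.mono ?_ ?_
        · exact (Set.image_mono (f := S i) (wordMap_image_subset hUsub u))
        · exact (Set.image_mono (f := S j) (wordMap_image_subset hUsub v))

lemma cut_incomp {N : ℕ} {r : Fin N → ℝ} (hr : ∀ i, r i ∈ Set.Ioo (0:ℝ) 1) {ρ : ℝ}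
    {u v : List (Fin N)}
    (hu : u ≠ [] ∧ wordProd r u < ρ ∧ ρ ≤ wordProd r u.dropLast)
    (hv : v ≠ [] ∧ wordProd r v < ρ ∧ ρ ≤ wordProd r v.dropLast)
    (huv : u ≠ v) : ¬ u <+: v := by
  intro hpre
  obtain ⟨t, rfl⟩ := hpre
  have ht : t ≠ [] := by rintro rfl; simp at huv
  have h1 : (u ++ t).dropLast = u ++ t.dropLast := List.dropLast_append_of_ne_nil ht
  have h2 : wordProd r (u ++ t.dropLast) ≤ wordProd r u :=
    wordProd_prefix_le (fun i => (hr i).1) (fun i => (hr i).2.le) ⟨t.dropLast, rfl⟩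
  rw [h1] at hv
  linarith [hu.2.1, hv.2.2]

lemma wordProd_replicate {N : ℕ} (q : Fin N → ℝ) (n : ℕ) (i : Fin N) :
    wordProd q (List.replicate n i) = q i ^ n := by
  induction n with
  | zero => simp [wordProd]
  | succ n ih => rw [List.replicate_succ, wordProd_cons, ih, pow_succ]; ring

theorem measure_ball_le_max_word_weight (N d : ℕ) (hN : 1 ≤ N)
    (S : Fin N → EuclideanSpace ℝ (Fin d) → EuclideanSpace ℝ (Fin d))
    (r p : Fin N → ℝ) (hr : ∀ i, r i ∈ Set.Ioo (0:ℝ) 1)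
    (hS : ∀ i x y, dist (S i x) (S i y) = r i * dist x y)
    (hp : ∀ i, 0 < p i) (hpsum : ∑ i, p i = 1)
    (K : Set (EuclideanSpace ℝ (Fin d))) (hKne : K.Nonempty) (hKc : IsCompact K)
    (hK : K = ⋃ i, S i '' K)
    (μ : Measure (EuclideanSpace ℝ (Fin d))) [IsProbabilityMeasure μ]
    (hμ : μ = ∑ i, ENNReal.ofReal (p i) • μ.map (S i))
    -- open set condition
    (U : Set (EuclideanSpace ℝ (Fin d))) (hUo : IsOpen U) (hUne : U.Nonempty)
    (hUb : Bornology.IsBounded U) (hUsub : ∀ i, S i '' U ⊆ U)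
    (hUdisj : Pairwise fun i j : Fin N => Disjoint (S i '' U) (S j '' U)) :
    ∃ c₁ : ℝ≥0, ∀ x ∈ K, ∀ ρ : ℝ, 0 < ρ → ρ < 1 →
      μ (ball x ρ) ≤ (c₁ : ℝ≥0∞) *
        ⨆ (u : List (Fin N)) (_ : u ≠ [] ∧ wordProd r u < ρ ∧
            ρ ≤ wordProd r u.dropLast ∧ (wordMap S u '' K ∩ ball x ρ).Nonempty),
          ENNReal.ofReal (wordProd p u) := by
  obtain ⟨k₀, hk₀⟩ := id hKne
  have hne : (Finset.univ : Finset (Fin N)).Nonempty := ⟨⟨0, by omega⟩, Finset.mem_univ _⟩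
  set rmax : ℝ := Finset.univ.sup' hne r with hrmaxdef
  set rmin : ℝ := Finset.univ.inf' hne r with hrmindef
  have hrmax : ∀ i, r i ≤ rmax := fun i => Finset.le_sup' r (Finset.mem_univ i)
  have hrmin : ∀ i, rmin ≤ r i := fun i => Finset.inf'_le r (Finset.mem_univ i)
  have hrmax1 : rmax < 1 := by
    obtain ⟨i0, -, hi0⟩ := Finset.exists_mem_eq_sup' hne r
    rw [hrmaxdef, hi0]; exact (hr i0).2
  have hrmax0 : 0 < rmax := lt_of_lt_of_le (hr ⟨0, by omega⟩).1 (hrmax _)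
  have hrmin0 : 0 < rmin := by
    obtain ⟨i0, -, hi0⟩ := Finset.exists_mem_eq_inf' hne r
    rw [hrmindef, hi0]; exact (hr i0).1
  set C : ℝ := Finset.univ.sup' hne (fun i => ‖S i 0‖) with hCdef
  have hC : ∀ i, ‖S i 0‖ ≤ C := fun i => Finset.le_sup' (fun i => ‖S i 0‖) (Finset.mem_univ i)
  have hC0 : 0 ≤ C := le_trans (norm_nonneg _) (hC ⟨0, by omega⟩)
  have hμK : μ (Kᶜ) = 0 :=
    null_compl_K hr hS hμ hp hpsum hKne hKc hK hrmax hrmax1 hrmax0 hC hC0 le_rfl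
  have hinj : ∀ i, Function.Injective (S i) := fun i => sim_injective (hr i).1 (hS i)
  rcases subsingleton_or_nontrivial (EuclideanSpace ℝ (Fin d)) with hsub | hnt
  · -- subsingleton case
    by_cases hN2 : 2 ≤ N
    · exfalso
      set i0 : Fin N := ⟨0, by omega⟩ with hi0
      set j0 : Fin N := ⟨1, by omega⟩ with hj0
      have hij : i0 ≠ j0 := by simp [hi0, hj0, Fin.ext_iff]
      obtain ⟨z₀, hz₀⟩ := hUne
      have hmem1 : S i0 z₀ ∈ S i0 '' U := Set.mem_image_of_mem _ hz₀
      have hmem2 : S i0 z₀ ∈ S j0 '' U := by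
        have h2 : S j0 z₀ ∈ S j0 '' U := Set.mem_image_of_mem _ hz₀
        rwa [Subsingleton.elim (S i0 z₀) (S j0 z₀)]
      exact Set.not_disjoint_iff.2 ⟨S i0 z₀, hmem1, hmem2⟩ (hUdisj hij)
    · have hN1 : N = 1 := by omega
      subst hN1
      refine ⟨1, fun x hx ρ hρ0 hρ1 => ?_⟩
      have hp0 : p 0 = 1 := by simpa using hpsum
      have hex : ∃ m : ℕ, r 0 ^ (m+1) < ρ := by
        obtain ⟨L, hL⟩ := exists_pow_lt_of_lt_one hρ0 (hr 0).2
        exact ⟨L, lt_of_le_of_lt (by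
          rw [pow_succ]
          exact mul_le_of_le_one_right (pow_nonneg (hr 0).1.le L) (hr 0).2.le) hL⟩
      set m := Nat.find hex with hm
      set u : List (Fin 1) := List.replicate (m+1) 0 with hu
      have hu1 : u ≠ [] := by simp [hu]
      have hu2 : wordProd r u < ρ := by
        rw [hu, wordProd_replicate]; exact Nat.find_spec hex
      have hu3 : ρ ≤ wordProd r u.dropLast := by
        have hdl : u.dropLast = List.replicate m 0 := by
          rw [hu, List.replicate_succ' , List.dropLast_concat]
        rw [hdl, wordProd_replicate]
        match hmm : m with
        | 0 => simpa using hρ1.le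
        | Nat.succ k =>
          have := Nat.find_min hex (m := k) (by omega)
          push_neg at this
          exact this
      have hu4 : (wordMap S u '' K ∩ ball x ρ).Nonempty := by
        refine ⟨wordMap S u k₀, ⟨k₀, hk₀, rfl⟩, ?_⟩
        rw [mem_ball, Subsingleton.elim (wordMap S u k₀) x, dist_self]
        exact hρ0
      have hsup : (1 : ℝ≥0∞) ≤ ⨆ (u : List (Fin 1)) (_ : u ≠ [] ∧ wordProd r u < ρ ∧
            ρ ≤ wordProd r u.dropLast ∧ (wordMap S u '' K ∩ ball x ρ).Nonempty),
          ENNReal.ofReal (wordProd p u) := by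
        refine le_iSup₂_of_le u ⟨hu1, hu2, hu3, hu4⟩ ?_
        rw [hu, wordProd_replicate, hp0, one_pow, ENNReal.ofReal_one]
      calc μ (ball x ρ) ≤ 1 := prob_le_one
        _ ≤ (1:ℝ≥0) * ⨆ (u : List (Fin 1)) (_ : u ≠ [] ∧ wordProd r u < ρ ∧
            ρ ≤ wordProd r u.dropLast ∧ (wordMap S u '' K ∩ ball x ρ).Nonempty),
          ENNReal.ofReal (wordProd p u) := by
            rw [ENNReal.coe_one, one_mul]; exact hsup
  · -- nontrivial case
    obtain ⟨z₀, hz₀⟩ := hUne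
    obtain ⟨a, ha0, haU⟩ := Metric.isOpen_iff.1 hUo z₀ hz₀
    obtain ⟨Ru, hRu⟩ := hUb.subset_closedBall 0
    obtain ⟨Rk, hRk⟩ := hKc.isBounded.subset_closedBall 0
    have hRu0 : 0 ≤ Ru := le_trans (norm_nonneg z₀) (by
      have := hRu hz₀; rwa [mem_closedBall, dist_zero_right] at this)
    have hRk0 : 0 ≤ Rk := le_trans (norm_nonneg k₀) (by
      have := hRk hk₀; rwa [mem_closedBall, dist_zero_right] at this)
    set Cb : ℝ := a + Ru + Rk + 1 with hCb
    have hCb0 : 0 < Cb := by positivity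
    refine ⟨((Cb / (rmin * a))^d).toNNReal, fun x hx ρ hρ0 hρ1 => ?_⟩
    obtain ⟨L, hL⟩ := exists_pow_lt_of_lt_one hρ0 hrmax1
    set B := ball x ρ with hB
    have hBm : MeasurableSet B := measurableSet_ball
    set G := (cutWords N r ρ L).filter
      (fun u => (wordMap S u '' K ∩ ball x ρ).Nonempty) with hG
    have hGconds : ∀ u ∈ G, (u ≠ [] ∧ wordProd r u < ρ ∧ ρ ≤ wordProd r u.dropLast)
        ∧ (wordMap S u '' K ∩ ball x ρ).Nonempty := by
      intro u hu
      obtain ⟨hcut, hhit⟩ := Finset.mem_filter.1 hu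
      exact ⟨(Finset.mem_filter.1 hcut).2, hhit⟩
    -- Step 1 & 2
    have step1 : μ B ≤ ∑ u ∈ cutWords N r ρ L,
        ENNReal.ofReal (wordProd p u) * μ (wordMap S u ⁻¹' B) :=
      cut_sum hr hS hμ hp hrmax hρ1.le hL hBm
    have step2 : ∑ u ∈ cutWords N r ρ L,
        ENNReal.ofReal (wordProd p u) * μ (wordMap S u ⁻¹' B) ≤
        ∑ u ∈ G, ENNReal.ofReal (wordProd p u) := by
      rw [hG, Finset.sum_filter]
      refine Finset.sum_le_sum fun u hu => ?_
      by_cases hhit : (wordMap S u '' K ∩ ball x ρ).Nonempty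
      · rw [if_pos hhit]
        calc ENNReal.ofReal (wordProd p u) * μ (wordMap S u ⁻¹' B)
            ≤ ENNReal.ofReal (wordProd p u) * 1 := mul_le_mul_right prob_le_one _
          _ = _ := mul_one _
      · rw [if_neg hhit]
        have hz : μ (wordMap S u ⁻¹' B) = 0 := by
          refine measure_mono_null ?_ hμK
          intro y hy
          rw [Set.mem_compl_iff]
          intro hyK
          exact hhit ⟨wordMap S u y, ⟨y, hyK, rfl⟩, hy⟩
        rw [hz, mul_zero]
    -- Step 3
    set Sup := ⨆ (u : List (Fin N)) (_ : u ≠ [] ∧ wordProd r u < ρ ∧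
            ρ ≤ wordProd r u.dropLast ∧ (wordMap S u '' K ∩ ball x ρ).Nonempty),
          ENNReal.ofReal (wordProd p u) with hSup
    have step3 : ∑ u ∈ G, ENNReal.ofReal (wordProd p u) ≤ G.card • Sup := by
      refine Finset.sum_le_card_nsmul G _ _ fun u hu => ?_
      obtain ⟨⟨h1, h2, h3⟩, h4⟩ := hGconds u hu
      exact le_iSup₂_of_le u ⟨h1, h2, h3, h4⟩ le_rfl
    -- Step 4 : cardinality bound by volume argument
    have hrG : ∀ u ∈ G, ρ * rmin ≤ wordProd r u ∧ wordProd r u < ρ := by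
      intro u hu
      obtain ⟨⟨h1, h2, h3⟩, -⟩ := hGconds u hu
      refine ⟨?_, h2⟩
      have heq : u.dropLast ++ [u.getLast h1] = u := List.dropLast_append_getLast h1
      have : wordProd r u = wordProd r u.dropLast * r (u.getLast h1) := by
        conv_lhs => rw [← heq]
        rw [wordProd_append, wordProd_singleton]
      rw [this]
      exact mul_le_mul h3 (hrmin _) hrmin0.le
        (wordProd_pos (fun i => (hr i).1) u.dropLast).le
    have himg : ∀ u : List (Fin N),
        wordMap S u '' ball z₀ a = ball (wordMap S u z₀) (wordProd r u * a) := fun u =>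
      sim_image_ball (wordProd_pos (fun i => (hr i).1) u) (dist_wordMap hS u) z₀ a
    have hsubU : ∀ u : List (Fin N),
        ball (wordMap S u z₀) (wordProd r u * a) ⊆ wordMap S u '' U := fun u => by
      rw [← himg]; exact Set.image_mono haU
    have hpd : (↑G : Set (List (Fin N))).PairwiseDisjoint
        (fun u => ball (wordMap S u z₀) (wordProd r u * a)) := by
      intro u hu v hv huv
      have cu := (hGconds u (by simpa using hu)).1
      have cv := (hGconds v (by simpa using hv)).1
      exact (disjoint_wordMap_image hinj hUsub hUdisj u v
        (cut_incomp hr cu cv huv) (cut_incomp hr cv cu huv.symm)).mono (hsubU u) (hsubU v)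
    have hcover : ∀ u ∈ G, ball (wordMap S u z₀) (wordProd r u * a) ⊆ ball x (ρ * Cb) := by
      intro u hu y hy
      obtain ⟨-, ⟨w, ⟨k, hk, rfl⟩, hwB⟩⟩ := hGconds u hu
      obtain ⟨hlow, hup⟩ := hrG u hu
      rw [mem_ball] at hy hwB ⊢
      have htri : dist y x ≤ dist y (wordMap S u z₀) +
          dist (wordMap S u z₀) (wordMap S u k) + dist (wordMap S u k) x :=
        dist_triangle4 _ _ _ _
      have hdz : dist (wordMap S u z₀) (wordMap S u k) = wordProd r u * dist z₀ k :=
        dist_wordMap hS u z₀ k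
      have hzk : dist z₀ k ≤ Ru + Rk := by
        have h1 : ‖z₀‖ ≤ Ru := by
          have := hRu hz₀; rwa [mem_closedBall, dist_zero_right] at this
        have h2 : ‖k‖ ≤ Rk := by
          have := hRk hk; rwa [mem_closedBall, dist_zero_right] at this
        calc dist z₀ k ≤ dist z₀ 0 + dist (0 : EuclideanSpace ℝ (Fin d)) k := dist_triangle _ _ _
          _ = ‖z₀‖ + ‖k‖ := by rw [dist_zero_right, dist_comm, dist_zero_right]
          _ ≤ Ru + Rk := add_le_add h1 h2
      have hupos := wordProd_pos (fun i => (hr i).1) u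
      have h5 : wordProd r u * (a + Ru + Rk) < ρ * (a + Ru + Rk) :=
        mul_lt_mul_of_pos_right hup (by linarith)
      have h6 : wordProd r u * dist z₀ k ≤ wordProd r u * (Ru + Rk) :=
        mul_le_mul_of_nonneg_left hzk hupos.le
      rw [hCb]
      nlinarith [hy, hwB, htri, hdz]
    have hVpos : 0 < volume (ball (0 : EuclideanSpace ℝ (Fin d)) 1) :=
      Metric.measure_ball_pos _ _ one_pos
    have hVne : volume (ball (0 : EuclideanSpace ℝ (Fin d)) 1) ≠ ⊤ :=
      measure_ball_lt_top.ne
    have hfr : Module.finrank ℝ (EuclideanSpace ℝ (Fin d)) = d := finrank_euclideanSpace_fin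
    have hballvol : ∀ u ∈ G, ENNReal.ofReal ((ρ * rmin * a)^d) *
        volume (ball (0 : EuclideanSpace ℝ (Fin d)) 1) ≤
        volume (ball (wordMap S u z₀) (wordProd r u * a)) := by
      intro u hu
      obtain ⟨hlow, -⟩ := hrG u hu
      have hupos := wordProd_pos (fun i => (hr i).1) u
      rw [show volume (ball (wordMap S u z₀) (wordProd r u * a)) =
          ENNReal.ofReal ((wordProd r u * a) ^ d) *
            volume (ball (0 : EuclideanSpace ℝ (Fin d)) 1) from by
        rw [Measure.addHaar_ball volume _ (by positivity), hfr]]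
      refine mul_le_mul_left (ENNReal.ofReal_le_ofReal ?_) _
      exact pow_le_pow_left₀ (by positivity) (by nlinarith) d
    have hsumvol : (G.card : ℝ≥0∞) * (ENNReal.ofReal ((ρ * rmin * a)^d) *
        volume (ball (0 : EuclideanSpace ℝ (Fin d)) 1)) ≤
        ENNReal.ofReal ((ρ * Cb)^d) * volume (ball (0 : EuclideanSpace ℝ (Fin d)) 1) := by
      calc (G.card : ℝ≥0∞) * (ENNReal.ofReal ((ρ * rmin * a)^d) *
            volume (ball (0 : EuclideanSpace ℝ (Fin d)) 1))
          = G.card • (ENNReal.ofReal ((ρ * rmin * a)^d) *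
            volume (ball (0 : EuclideanSpace ℝ (Fin d)) 1)) := (nsmul_eq_mul _ _).symm
        _ ≤ ∑ u ∈ G, volume (ball (wordMap S u z₀) (wordProd r u * a)) :=
            Finset.card_nsmul_le_sum G _ _ hballvol
        _ = volume (⋃ u ∈ G, ball (wordMap S u z₀) (wordProd r u * a)) :=
            (measure_biUnion_finset hpd (fun u _ => measurableSet_ball)).symm
        _ ≤ volume (ball x (ρ * Cb)) := measure_mono (Set.iUnion₂_subset hcover)
        _ = ENNReal.ofReal ((ρ * Cb)^d) * volume (ball (0 : EuclideanSpace ℝ (Fin d)) 1) := by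
            rw [Measure.addHaar_ball volume _ (by positivity), hfr]
    have hfactor : ENNReal.ofReal ((ρ * Cb)^d) =
        ENNReal.ofReal ((ρ * rmin * a)^d) * ENNReal.ofReal ((Cb / (rmin * a))^d) := by
      rw [← ENNReal.ofReal_mul (by positivity)]
      congr 1
      rw [← mul_pow]
      congr 1
      field_simp
    have hQVne : ENNReal.ofReal ((ρ * rmin * a)^d) *
        volume (ball (0 : EuclideanSpace ℝ (Fin d)) 1) ≠ 0 := by
      refine mul_ne_zero ?_ hVpos.ne'
      exact (ENNReal.ofReal_pos.2 (by positivity)).ne'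
    have hQVtop : ENNReal.ofReal ((ρ * rmin * a)^d) *
        volume (ball (0 : EuclideanSpace ℝ (Fin d)) 1) ≠ ⊤ :=
      ENNReal.mul_ne_top ENNReal.ofReal_ne_top hVne
    have step4 : (G.card : ℝ≥0∞) ≤ ENNReal.ofReal ((Cb / (rmin * a))^d) := by
      rw [hfactor] at hsumvol
      have h7 : (G.card : ℝ≥0∞) * (ENNReal.ofReal ((ρ * rmin * a)^d) *
          volume (ball (0 : EuclideanSpace ℝ (Fin d)) 1)) ≤
          ENNReal.ofReal ((Cb / (rmin * a))^d) * (ENNReal.ofReal ((ρ * rmin * a)^d) *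
          volume (ball (0 : EuclideanSpace ℝ (Fin d)) 1)) := by
        refine le_trans hsumvol (le_of_eq ?_)
        ring
      exact (ENNReal.mul_le_mul_iff_left hQVne hQVtop).1 h7
    -- combine
    calc μ (ball x ρ) ≤ ∑ u ∈ G, ENNReal.ofReal (wordProd p u) := le_trans step1 step2
      _ ≤ G.card • Sup := step3
      _ = (G.card : ℝ≥0∞) * Sup := nsmul_eq_mul _ _
      _ ≤ (((Cb / (rmin * a))^d).toNNReal : ℝ≥0∞) * Sup := by
          refine mul_le_mul_left ?_ _
          simpa [ENNReal.ofReal] using step4
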